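/- For every integer K ≥ 1 and every H ∈ ℕ, the value function s ↦ V H s is continuous on Fin K → ℝ. -/

import Mathlib

open scoped BigOperators

noncomputable section

def simplex (K : ℕ) : Set (Fin K → ℝ) :=
  {q | (∀ k, 0 ≤ q k) ∧ ∑ k, q k = 1}

def simplexInt (K : ℕ) : Set (Fin K → ℝ) :=
  {r | (∀ k, 0 < r k) ∧ ∑ k, r k = 1}

noncomputable def V (K : ℕ) : ℕ → (Fin K → ℝ) → ℝ
  | 0, s => ⨆ k, s k
  | H + 1, s =>
      sInf ((fun r : Fin K → ℝ =>
        sSup ((fun q : Fin K → ℝ => V K H (fun k => s k + q k / r k)) '' simplex K))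
        '' simplexInt K)

lemma uniform_mem_simplexInt (K : ℕ) (hK : 1 ≤ K) :
    (fun _ : Fin K => (K : ℝ)⁻¹) ∈ simplexInt K := by
  have hKpos : (0 : ℝ) < K := by exact_mod_cast hK
  constructor
  · intro k; positivity
  · simp [Finset.sum_const, Finset.card_univ]
    field_simp

lemma uniform_mem_simplex (K : ℕ) (hK : 1 ≤ K) :
    (fun _ : Fin K => (K : ℝ)⁻¹) ∈ simplex K := by
  obtain ⟨h1, h2⟩ := uniform_mem_simplexInt K hK
  exact ⟨fun k => (h1 k).le, h2⟩

lemma V_mono_lip (K : ℕ) (hK : 1 ≤ K) (H : ℕ) :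
    (∀ s t : Fin K → ℝ, (∀ k, s k ≤ t k) → V K H s ≤ V K H t) ∧
    (∀ s t : Fin K → ℝ, V K H s ≤ V K H t + dist s t) := by
  haveI : Nonempty (Fin K) := Fin.pos_iff_nonempty.mp (by omega)
  induction H with
  | zero =>
    constructor
    · intro s t hst
      exact ciSup_mono (Set.Finite.bddAbove (Set.finite_range t)) hst
    · intro s t
      refine ciSup_le fun k => ?_
      have h1 : s k - t k ≤ dist s t := by
        calc s k - t k ≤ |s k - t k| := le_abs_self _
        _ = dist (s k) (t k) := (Real.dist_eq _ _).symm
        _ ≤ dist s t := dist_le_pi_dist s t k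
      have h2 : t k ≤ ⨆ j, t j := le_ciSup (Set.Finite.bddAbove (Set.finite_range t)) k
      simp only [V] at *
      linarith
  | succ H IH =>
    obtain ⟨IHmono, IHlip⟩ := IH
    set u : Fin K → ℝ := fun _ => (K : ℝ)⁻¹ with hu
    have hu1 := uniform_mem_simplex K hK
    have hu2 := uniform_mem_simplexInt K hK
    -- basic facts about the inner sets
    set S : (Fin K → ℝ) → (Fin K → ℝ) → Set ℝ := fun s r =>
      (fun q : Fin K → ℝ => V K H (fun k => s k + q k / r k)) '' simplex K with hS
    have hSne : ∀ s r, (S s r).Nonempty := fun s r => ⟨_, u, hu1, rfl⟩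
    have hSbdd : ∀ s r, r ∈ simplexInt K → BddAbove (S s r) := by
      rintro s r hr
      refine ⟨V K H (fun k => s k + 1 / r k), ?_⟩
      rintro _ ⟨q, hq, rfl⟩
      refine IHmono _ _ fun k => ?_
      have hq1 : q k ≤ 1 := by
        rw [← hq.2]
        exact Finset.single_le_sum (fun j _ => hq.1 j) (Finset.mem_univ k)
      have := hr.1 k
      gcongr
    have hSlb : ∀ s r, r ∈ simplexInt K → V K H s ≤ sSup (S s r) := by
      intro s r hr
      refine le_trans ?_ (le_csSup (hSbdd s r hr) ⟨u, hu1, rfl⟩)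
      refine IHmono _ _ fun k => ?_
      have h1 := hu2.1 k
      have h2 := hr.1 k
      have : 0 ≤ u k / r k := by positivity
      linarith
    set A : (Fin K → ℝ) → Set ℝ := fun s =>
      (fun r : Fin K → ℝ => sSup (S s r)) '' simplexInt K with hA
    have hAne : ∀ s, (A s).Nonempty := fun s => ⟨_, u, hu2, rfl⟩
    have hAbdd : ∀ s, BddBelow (A s) := by
      intro s
      refine ⟨V K H s, ?_⟩
      rintro _ ⟨r, hr, rfl⟩
      exact hSlb s r hr
    have hVdef : ∀ s, V K (H + 1) s = sInf (A s) := fun s => rfl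
    constructor
    · intro s t hst
      rw [hVdef, hVdef]
      refine le_csInf (hAne t) ?_
      rintro _ ⟨r, hr, rfl⟩
      refine le_trans (csInf_le (hAbdd s) ⟨r, hr, rfl⟩) ?_
      refine csSup_le (hSne s r) ?_
      rintro _ ⟨q, hq, rfl⟩
      refine le_trans (IHmono _ _ fun k => add_le_add (hst k) le_rfl)
        (le_csSup (hSbdd t r hr) ⟨q, hq, rfl⟩)
    · intro s t
      rw [hVdef, hVdef]
      have key : ∀ b ∈ A t, sInf (A s) ≤ b + dist s t := by
        rintro _ ⟨r, hr, rfl⟩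
        refine le_trans (csInf_le (hAbdd s) ⟨r, hr, rfl⟩) ?_
        refine csSup_le (hSne s r) ?_
        rintro _ ⟨q, hq, rfl⟩
        have hd : dist (fun k => s k + q k / r k) (fun k => t k + q k / r k) = dist s t := by
          have h1 : (fun k => s k + q k / r k) = s + fun k => q k / r k := rfl
          have h2 : (fun k => t k + q k / r k) = t + fun k => q k / r k := rfl
          rw [h1, h2, dist_add_right]
        have := IHlip (fun k => s k + q k / r k) (fun k => t k + q k / r k)
        rw [hd] at this
        refine le_trans this ?_
        have := le_csSup (hSbdd t r hr) (⟨q, hq, rfl⟩ : _ ∈ S t r)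
        linarith
      have : sInf (A s) - dist s t ≤ sInf (A t) := by
        refine le_csInf (hAne t) fun b hb => ?_
        have := key b hb
        linarith
      linarith

/-- The value function is continuous on the whole state space. -/
theorem value_continuous (K : ℕ) (hK : 1 ≤ K) (H : ℕ) :
    Continuous (V K H) := by
  have hlip := (V_mono_lip K hK H).2
  refine (LipschitzWith.of_dist_le_mul (K := 1) fun s t => ?_).continuous
  rw [Real.dist_eq, NNReal.coe_one, one_mul, abs_sub_le_iff]
  constructor
  · have := hlip s t; linarith
  · have := hlip t s; rw [dist_comm] at this; linarith
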